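/- Let h : [0,∞) → ℝ be twice continuously differentiable, α₁, α₂ > 0, and define b(t) = ḣ(t) + α₁ h(t). Suppose ḃ(t) ≥ −α₂ b(t) for all t ≥ 0, h(0) ≥ 0, and b(0) ≥ 0. Then h(t) ≥ 0 for all t ≥ 0. -/

import Mathlib

lemma aux_gronwall (f : ℝ → ℝ) (α : ℝ) (hf : Differentiable ℝ f)
    (hd : ∀ t, 0 ≤ t → -α * f t ≤ deriv f t) (h0 : 0 ≤ f 0) :
    ∀ t, 0 ≤ t → 0 ≤ f t := by
  set g : ℝ → ℝ := fun t => Real.exp (α * t) * f t with hg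
  have hgd : ∀ t, HasDerivAt g (Real.exp (α * t) * (α * f t + deriv f t)) t := by
    intro t
    have h1 : HasDerivAt (fun t => Real.exp (α * t)) (α * Real.exp (α * t)) t := by
      have := (Real.hasDerivAt_exp (α * t)).comp t ((hasDerivAt_id t).const_mul α)
      simpa [mul_comm, Function.comp_def] using this
    have := h1.fun_mul (hf t).hasDerivAt
    rw [show Real.exp (α * t) * (α * f t + deriv f t) = α * Real.exp (α * t) * f t + Real.exp (α * t) * deriv f t by ring]
    exact this
  have hmono : MonotoneOn g (Set.Ici 0) := by
    apply monotoneOn_of_deriv_nonneg (convex_Ici 0)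
      (fun t _ => ((hgd t).differentiableAt.continuousAt).continuousWithinAt)
      (fun t ht => ((hgd t).differentiableAt).differentiableWithinAt)
    intro t ht
    rw [interior_Ici] at ht
    rw [(hgd t).deriv]
    have := hd t ht.le
    nlinarith [Real.exp_pos (α * t)]
  intro t ht
  have := hmono (Set.self_mem_Ici) ht ht
  have hg0 : g 0 = f 0 := by simp [hg]
  have h2 : 0 ≤ Real.exp (α * t) * f t := by
    rw [hg0] at this; simpa [hg] using le_trans h0 this
  have hep := Real.exp_pos (α * t)
  nlinarith

theorem ho_cbf_forward_invariance
    (h : ℝ → ℝ) (α₁ α₂ : ℝ) (hα₁ : 0 < α₁) (hα₂ : 0 < α₂)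
    (hsmooth : ContDiff ℝ 2 h)
    (b : ℝ → ℝ) (hb : ∀ t, b t = deriv h t + α₁ * h t)
    (hcbf : ∀ t, 0 ≤ t → deriv b t ≥ -α₂ * b t)
    (h0 : 0 ≤ h 0) (b0 : 0 ≤ b 0) :
    ∀ t, 0 ≤ t → 0 ≤ h t := by
  have hdh : Differentiable ℝ h := hsmooth.differentiable (by norm_num)
  have hdh' : Differentiable ℝ (deriv h) :=
    (hsmooth.iterate_deriv' 1 1).differentiable (by norm_num)
  have hbdiff : Differentiable ℝ b := by
    have hbe : b = fun t => deriv h t + α₁ * h t := funext hb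
    rw [hbe]
    exact hdh'.add (hdh.const_mul α₁)
  have hbpos : ∀ t, 0 ≤ t → 0 ≤ b t :=
    aux_gronwall b α₂ hbdiff (fun t ht => hcbf t ht) b0
  apply aux_gronwall h α₁ hdh _ h0
  intro t ht
  have := hbpos t ht
  rw [hb t] at this
  linarith
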